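/- Let α ∈ (1,2). The function t ↦ | Γ(1-(α+1)it) / ( Γ(α/(α+1)-it) · Γ(1-it) ) | is integrable over ℝ, where Γ is the complex Gamma function. (This absolute integrability of the Mellin transform of 𝒜_α along the imaginary line justifies the Mellin inversion formula for its density.) -/

import Mathlib

open MeasureTheory

section MellinHelpers

open Real Set Filter Finset
open scoped Topology


lemma normSq_gammaSeq (x t : ℝ) {n : ℕ} (hn : 1 ≤ n) :
    Complex.normSq (Complex.GammaSeq ((x : ℂ) - (t : ℂ) * Complex.I) n) =
      ((n : ℝ) ^ x * n.factorial) ^ 2 /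
        ∏ j ∈ Finset.range (n + 1), ((x + j) ^ 2 + t ^ 2) := by
  have hn' : (0:ℝ) < n := Nat.cast_pos.mpr hn
  rw [Complex.GammaSeq, map_div₀, map_mul, map_prod]
  congr 1
  · rw [mul_pow, ← Complex.sq_norm]
    have : ((n : ℂ)) = ((n : ℝ) : ℂ) := by push_cast; ring
    rw [this, Complex.norm_cpow_eq_rpow_re_of_pos hn']
    have : ((x : ℂ) - (t : ℂ) * Complex.I).re = x := by simp
    rw [this]
    congr 1
    simp [Complex.normSq_apply]
    ring
  · refine Finset.prod_congr rfl fun j _ => ?_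
    simp [Complex.normSq_apply]
    ring

lemma prod_div_ineq {a : ℝ} (ha : 0 < a) (t : ℝ) (n : ℕ) :
    ∏ j ∈ Finset.range (n + 1), (1 + t ^ 2 / (a + j) ^ 2) ≤
      (1 + t ^ 2 / a ^ 2) * ∏ j ∈ Finset.range (n + 1), (1 + t ^ 2 / (1 + j) ^ 2) := by
  rw [Finset.prod_range_succ' (fun j => (1 + t ^ 2 / (a + (j:ℝ)) ^ 2)) n]
  simp only [Nat.cast_zero, add_zero]
  rw [mul_comm]
  have hS : (0:ℝ) < 1 + t ^ 2 / a ^ 2 := by positivity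
  refine mul_le_mul_of_nonneg_left ?_ hS.le
  calc ∏ j ∈ Finset.range n, (1 + t ^ 2 / (a + (j + 1 : ℕ)) ^ 2)
      ≤ ∏ j ∈ Finset.range n, (1 + t ^ 2 / (1 + (j:ℝ)) ^ 2) := by
        refine Finset.prod_le_prod (fun j _ => by positivity) (fun j _ => ?_)
        have h1 : (0:ℝ) < (1 + (j:ℝ)) := by positivity
        have h2 : (1 + (j:ℝ)) ≤ (a + ((j:ℕ) + 1 : ℕ)) := by push_cast; linarith
        gcongr
    _ ≤ ∏ j ∈ Finset.range (n + 1), (1 + t ^ 2 / (1 + (j:ℝ)) ^ 2) := by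
        rw [Finset.prod_range_succ]
        have hpn : (0:ℝ) ≤ ∏ j ∈ Finset.range n, (1 + t ^ 2 / (1 + (j:ℝ)) ^ 2) :=
          Finset.prod_nonneg fun j _ => by positivity
        have h1 : (1:ℝ) ≤ 1 + t ^ 2 / (1 + (n:ℝ)) ^ 2 := by
          have : (0:ℝ) ≤ t ^ 2 / (1 + (n:ℝ)) ^ 2 := by positivity
          linarith
        exact le_mul_of_one_le_right hpn h1

lemma le_of_sq_le_sq'' {x y : ℝ} (hx : 0 ≤ x) (hy : 0 ≤ y) (h : x ^ 2 ≤ y ^ 2) : x ≤ y := by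
  nlinarith [sq_nonneg (x - y), sq_nonneg (x + y)]

lemma gammaSeq_pos {a : ℝ} (ha : 0 < a) {n : ℕ} (hn : 1 ≤ n) : 0 < Real.GammaSeq a n := by
  have hn' : (0:ℝ) < n := Nat.cast_pos.mpr hn
  rw [Real.GammaSeq]
  apply div_pos
  · have : (0:ℝ) < (n:ℝ) ^ a := Real.rpow_pos_of_pos hn' a
    have h2 : (0:ℝ) < (n.factorial : ℝ) := Nat.cast_pos.mpr n.factorial_pos
    positivity
  · exact Finset.prod_pos fun j _ => by positivity

set_option maxHeartbeats 800000 in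
lemma gammaSeq_sq_ineq {a : ℝ} (ha : 0 < a) (t : ℝ) {n : ℕ} (hn : 1 ≤ n) :
    (‖(Complex.GammaSeq (((1:ℝ) : ℂ) - (t:ℂ) * Complex.I) n)‖ * Real.GammaSeq a n) ^ 2 ≤
      (1 + t ^ 2 / a ^ 2) *
        (‖(Complex.GammaSeq ((a : ℂ) - (t:ℂ) * Complex.I) n)‖ * Real.GammaSeq 1 n) ^ 2 := by
  have hn' : (0:ℝ) < n := Nat.cast_pos.mpr hn
  have hfac : (0:ℝ) < (n.factorial : ℝ) := Nat.cast_pos.mpr n.factorial_pos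
  set P1 : ℝ := ∏ j ∈ Finset.range (n + 1), ((1 + (j:ℝ)) ^ 2 + t ^ 2) with hP1
  set Pa : ℝ := ∏ j ∈ Finset.range (n + 1), ((a + (j:ℝ)) ^ 2 + t ^ 2) with hPa
  set Q1 : ℝ := ∏ j ∈ Finset.range (n + 1), (1 + (j:ℝ)) with hQ1
  set Qa : ℝ := ∏ j ∈ Finset.range (n + 1), (a + (j:ℝ)) with hQa
  have hP1p : 0 < P1 := Finset.prod_pos fun j _ => by positivity
  have hPap : 0 < Pa := Finset.prod_pos fun j _ => by positivity
  have hQ1p : 0 < Q1 := Finset.prod_pos fun j _ => by positivity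
  have hQap : 0 < Qa := Finset.prod_pos fun j _ => by positivity
  set A1 : ℝ := ((n:ℝ) ^ (1:ℝ) * n.factorial) ^ 2 with hA1
  set Aa : ℝ := ((n:ℝ) ^ a * n.factorial) ^ 2 with hAa
  have hA1p : 0 < A1 := by
    have := Real.rpow_pos_of_pos hn' (1:ℝ); positivity
  have hAap : 0 < Aa := by
    have := Real.rpow_pos_of_pos hn' a; positivity
  -- key product inequality
  have hconv1 : ∏ j ∈ Finset.range (n + 1), (1 + t ^ 2 / (a + (j:ℝ)) ^ 2) = Pa / Qa ^ 2 := by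
    rw [hPa, hQa, ← Finset.prod_pow, ← Finset.prod_div_distrib]
    refine Finset.prod_congr rfl fun j _ => ?_
    have : (a + (j:ℝ)) ≠ 0 := by positivity
    field_simp
  have hconv2 : ∏ j ∈ Finset.range (n + 1), (1 + t ^ 2 / (1 + (j:ℝ)) ^ 2) = P1 / Q1 ^ 2 := by
    rw [hP1, hQ1, ← Finset.prod_pow, ← Finset.prod_div_distrib]
    refine Finset.prod_congr rfl fun j _ => ?_
    have : (1 + (j:ℝ)) ≠ 0 := by positivity
    field_simp
  have key : Pa * Q1 ^ 2 ≤ (1 + t ^ 2 / a ^ 2) * (P1 * Qa ^ 2) := by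
    have h := prod_div_ineq ha t n
    rw [hconv1, hconv2] at h
    have h' : Pa / Qa ^ 2 ≤ ((1 + t ^ 2 / a ^ 2) * P1) / Q1 ^ 2 := by
      rw [mul_div_assoc]; exact h
    rw [div_le_div_iff₀ (by positivity) (by positivity)] at h'
    nlinarith [h']
  -- rewrite both sides
  have e1 : (‖(Complex.GammaSeq (((1:ℝ) : ℂ) - (t:ℂ) * Complex.I) n)‖) ^ 2 = A1 / P1 := by
    rw [Complex.sq_norm, normSq_gammaSeq 1 t hn]
  have ea : (‖(Complex.GammaSeq ((a : ℂ) - (t:ℂ) * Complex.I) n)‖) ^ 2 = Aa / Pa := by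
    rw [Complex.sq_norm, normSq_gammaSeq a t hn]
  have r1 : (Real.GammaSeq 1 n) ^ 2 = A1 / Q1 ^ 2 := by
    rw [Real.GammaSeq, div_pow, hA1, hQ1]
  have ra : (Real.GammaSeq a n) ^ 2 = Aa / Qa ^ 2 := by
    rw [Real.GammaSeq, div_pow, hAa, hQa]
  rw [mul_pow, mul_pow, e1, ea, r1, ra]
  rw [div_mul_div_comm, div_mul_div_comm, ← mul_div_assoc]
  rw [div_le_div_iff₀ (by positivity) (by positivity)]
  nlinarith [mul_le_mul_of_nonneg_left key (le_of_lt (mul_pos hA1p hAap))]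

lemma gamma_ratio_lower {a : ℝ} (ha : 0 < a) (t : ℝ) :
    ‖(Complex.Gamma (((1:ℝ):ℂ) - (t:ℂ) * Complex.I))‖ * Real.Gamma a ≤
      Real.sqrt (1 + t ^ 2 / a ^ 2) *
        ‖(Complex.Gamma ((a : ℂ) - (t:ℂ) * Complex.I))‖ := by
  have h1 : Tendsto (fun n => ‖(Complex.GammaSeq (((1:ℝ):ℂ) - (t:ℂ) * Complex.I) n)‖
      * Real.GammaSeq a n) atTop
      (𝓝 (‖(Complex.Gamma (((1:ℝ):ℂ) - (t:ℂ) * Complex.I))‖ * Real.Gamma a)) :=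
    ((continuous_norm.tendsto _).comp
      (Complex.GammaSeq_tendsto_Gamma _)).mul (Real.GammaSeq_tendsto_Gamma a)
  have h2 : Tendsto (fun n => Real.sqrt (1 + t ^ 2 / a ^ 2) *
      (‖(Complex.GammaSeq ((a : ℂ) - (t:ℂ) * Complex.I) n)‖ * Real.GammaSeq 1 n)) atTop
      (𝓝 (Real.sqrt (1 + t ^ 2 / a ^ 2) *
        (‖(Complex.Gamma ((a : ℂ) - (t:ℂ) * Complex.I))‖ * Real.Gamma 1))) :=
    tendsto_const_nhds.mul (((continuous_norm.tendsto _).comp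
      (Complex.GammaSeq_tendsto_Gamma _)).mul (Real.GammaSeq_tendsto_Gamma 1))
  rw [Real.Gamma_one, mul_one] at h2
  refine le_of_tendsto_of_tendsto h1 h2 (eventually_atTop.2 ⟨1, fun n hn => ?_⟩)
  have hS : (0:ℝ) ≤ 1 + t ^ 2 / a ^ 2 := by positivity
  refine le_of_sq_le_sq'' ?_ ?_ ?_
  · exact mul_nonneg (norm_nonneg _) (gammaSeq_pos ha hn).le
  · exact mul_nonneg (Real.sqrt_nonneg _)
      (mul_nonneg (norm_nonneg _) (gammaSeq_pos one_pos hn).le)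
  · rw [mul_pow (Real.sqrt _), Real.sq_sqrt hS]
    exact gammaSeq_sq_ineq ha t hn

lemma abs_gamma_one_sub_mul_I_sq {t : ℝ} (ht : t ≠ 0) :
    ‖(Complex.Gamma (1 - (t:ℂ) * Complex.I))‖ ^ 2 =
      Real.pi * t / Real.sinh (Real.pi * t) := by
  set z : ℂ := (t:ℂ) * Complex.I with hz
  have hz0 : z ≠ 0 := by
    simp [hz, Complex.I_ne_zero, ht]
  have hs0 : Real.sinh (Real.pi * t) ≠ 0 :=
    Real.sinh_ne_zero.mpr (mul_ne_zero Real.pi_ne_zero ht)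
  have hsin : Complex.sin (↑Real.pi * z) = (Real.sinh (Real.pi * t) : ℂ) * Complex.I := by
    rw [show (↑Real.pi * z) = ((Real.pi * t : ℝ) : ℂ) * Complex.I by rw [hz]; push_cast; ring,
      Complex.sin_mul_I, Complex.ofReal_sinh]
  have hprod : Complex.Gamma (1 - z) * Complex.Gamma (1 + z)
      = ((Real.pi * t / Real.sinh (Real.pi * t) : ℝ) : ℂ) := by
    rw [show (1 + z : ℂ) = z + 1 by ring, Complex.Gamma_add_one z hz0]
    have h2 : Complex.Gamma (1 - z) * (z * Complex.Gamma z)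
        = z * (Complex.Gamma z * Complex.Gamma (1 - z)) := by ring
    rw [h2, Complex.Gamma_mul_Gamma_one_sub, hsin, hz]
    have hI := Complex.I_ne_zero
    have hs0' : ((Real.sinh (Real.pi * t) : ℝ) : ℂ) ≠ 0 := by exact_mod_cast hs0
    have hS : Complex.sinh ((Real.pi : ℂ) * (t : ℂ)) ≠ 0 := by
      rw [← Complex.ofReal_mul, ← Complex.ofReal_sinh]
      exact_mod_cast hs0
    field_simp
    rw [← Complex.ofReal_mul (Real.sinh (Real.pi * t)), mul_div_cancel₀ _ hs0]
    push_cast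
    ring
  have hconj : Complex.Gamma (1 + z) = (starRingEnd ℂ) (Complex.Gamma (1 - z)) := by
    rw [← Complex.Gamma_conj]
    congr 1
    apply Complex.ext <;> simp [hz]
  rw [hconj, Complex.mul_conj] at hprod
  rw [Complex.sq_norm]
  exact_mod_cast hprod


lemma sinh_le_half_exp (x : ℝ) : Real.sinh x ≤ Real.exp x / 2 := by
  rw [Real.sinh_eq]
  have := Real.exp_pos (-x)
  linarith

lemma quarter_exp_le_sinh {x : ℝ} (hx : 1 ≤ x) : Real.exp x / 4 ≤ Real.sinh x := by
  rw [Real.sinh_eq]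
  have h1 : 2 ≤ Real.exp x := by nlinarith [Real.add_one_le_exp x]
  have h2 : Real.exp (-x) * Real.exp x = 1 := by rw [← Real.exp_add]; simp
  have h3 : 0 < Real.exp (-x) := Real.exp_pos _
  nlinarith

lemma div_sinh_abs (x : ℝ) : x / Real.sinh x = |x| / Real.sinh |x| := by
  rcases le_or_gt 0 x with h | h
  · rw [abs_of_nonneg h]
  · rw [abs_of_neg h, Real.sinh_neg, neg_div_neg_eq]

set_option maxHeartbeats 1600000 in
lemma abstract_bound {N Da D1 Γa S T δ K c₁ : ℝ}
    (hN : 0 ≤ N) (hDa : 0 < Da) (hD1 : 0 < D1) (hΓa : 0 < Γa)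
    (hN2 : N ^ 2 = c₁ * T / Real.sinh (c₁ * T))
    (hD12 : D1 ^ 2 = Real.pi * T / Real.sinh (Real.pi * T))
    (hlow : D1 * Γa ≤ Real.sqrt S * Da)
    (hS : S ≤ 5 * T ^ 2) (hS0 : 0 ≤ S)
    (hT : 1 ≤ T) (hδ : 0 < δ) (hc₁ : 2 * Real.pi + 4 * δ = c₁)
    (hK : K = 5 * c₁ / (Real.pi ^ 2 * Γa ^ 2 * δ)) :
    N / (Da * D1) ≤ Real.sqrt K * Real.exp (-δ * T) := by
  have hπ := Real.pi_pos
  have hT0 : 0 < T := by linarith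
  have hc₁pos : 0 < c₁ := by rw [← hc₁]; positivity
  have hc₁T : 1 ≤ c₁ * T := by nlinarith [Real.pi_gt_three]
  have hs1p : 0 < Real.sinh (c₁ * T) := Real.sinh_pos_iff.mpr (by positivity)
  have hs2p : 0 < Real.sinh (Real.pi * T) := Real.sinh_pos_iff.mpr (by positivity)
  have hK0 : 0 ≤ K := by rw [hK]; positivity
  apply le_of_sq_le_sq'' (div_nonneg hN (by positivity)) (by positivity)
  rw [mul_pow, Real.sq_sqrt hK0, div_pow, mul_pow]
  have step1 : D1 ^ 2 * Γa ^ 2 ≤ S * Da ^ 2 := by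
    have h := pow_le_pow_left₀ (by positivity) hlow 2
    rw [mul_pow, mul_pow, Real.sq_sqrt hS0] at h
    linarith
  have step2 : N ^ 2 / (Da ^ 2 * D1 ^ 2) ≤ N ^ 2 * S / (Γa ^ 2 * D1 ^ 4) := by
    rw [div_le_div_iff₀ (by positivity) (by positivity)]
    nlinarith [mul_le_mul_of_nonneg_left step1 (by positivity : (0:ℝ) ≤ N ^ 2 * D1 ^ 2)]
  refine step2.trans ?_
  have hD14 : D1 ^ 4 = (Real.pi * T / Real.sinh (Real.pi * T)) ^ 2 := by
    rw [show (4:ℕ) = 2 * 2 from rfl, pow_mul, hD12]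
  rw [hN2, hD14]
  have e1 : Real.exp (c₁ * T) / 4 ≤ Real.sinh (c₁ * T) := quarter_exp_le_sinh hc₁T
  have e2 : Real.sinh (Real.pi * T) ≤ Real.exp (Real.pi * T) / 2 := sinh_le_half_exp _
  have hQeq : c₁ * T / Real.sinh (c₁ * T) * S / (Γa ^ 2 * (Real.pi * T / Real.sinh (Real.pi * T)) ^ 2)
      = (c₁ * T / Real.sinh (c₁ * T)) * S * (Real.sinh (Real.pi * T) / (Real.pi * T)) ^ 2 / Γa ^ 2 := by
    field_simp
  rw [hQeq]
  have hexp1 : 0 < Real.exp (c₁ * T) / 4 := by positivity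
  calc (c₁ * T / Real.sinh (c₁ * T)) * S * (Real.sinh (Real.pi * T) / (Real.pi * T)) ^ 2 / Γa ^ 2
      ≤ (c₁ * T / (Real.exp (c₁ * T) / 4)) * (5 * T ^ 2) *
          ((Real.exp (Real.pi * T) / 2) / (Real.pi * T)) ^ 2 / Γa ^ 2 := by
        gcongr
    _ = (5 * c₁ / (Real.pi ^ 2 * Γa ^ 2)) * T * Real.exp ((2 * Real.pi - c₁) * T) := by
        rw [show (2 * Real.pi - c₁) * T = Real.pi * T + Real.pi * T - c₁ * T by ring,
          Real.exp_sub, Real.exp_add]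
        field_simp
        ring
    _ ≤ (5 * c₁ / (Real.pi ^ 2 * Γa ^ 2)) * (Real.exp (δ * T) / δ) *
          Real.exp ((2 * Real.pi - c₁) * T) := by
        gcongr
        rw [le_div_iff₀ hδ]
        nlinarith [Real.add_one_le_exp (δ * T)]
    _ = K * Real.exp (-(3 * δ) * T) := by
        rw [hK, show (2 * Real.pi - c₁) * T = -(4 * δ) * T by rw [← hc₁]; ring,
          show -(3 * δ) * T = δ * T + -(4 * δ) * T by ring, Real.exp_add]
        field_simp
    _ ≤ K * Real.exp (-(2 * δ) * T) := by
        have h := Real.exp_le_exp.mpr (show -(3 * δ) * T ≤ -(2 * δ) * T by nlinarith)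
        exact mul_le_mul_of_nonneg_left h hK0
    _ = K * Real.exp (-δ * T) ^ 2 := by
        rw [pow_two, ← Real.exp_add]
        ring_nf

lemma main_bound {α : ℝ} (hα1 : 1 < α) {t : ℝ} (ht : 1 ≤ |t|) :
    ‖(Complex.Gamma (1 - ((α:ℂ)+1) * Complex.I * (t:ℂ)) /
        (Complex.Gamma ((α/(α+1) : ℝ) - Complex.I * (t:ℂ)) *
          Complex.Gamma (1 - Complex.I * (t:ℂ))))‖ ≤
      Real.sqrt (5 * (Real.pi * (α+1)) /
          (Real.pi ^ 2 * (Real.Gamma (α/(α+1))) ^ 2 * (Real.pi * (α-1) / 4)))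
        * Real.exp (-(Real.pi * (α-1) / 4) * |t|) := by
  have hπ := Real.pi_pos
  have hα0 : (0:ℝ) < α + 1 := by linarith
  have ht0 : t ≠ 0 := by intro h; rw [h, abs_zero] at ht; linarith
  have ha : 0 < α/(α+1) := div_pos (by linarith) hα0
  have ha2 : 1/2 ≤ α/(α+1) := by rw [le_div_iff₀ hα0]; linarith
  have hΓa := Real.Gamma_pos_of_pos ha
  rw [norm_div, norm_mul]
  have e1 : (1 : ℂ) - ((α:ℂ)+1) * Complex.I * (t:ℂ) = 1 - (((α+1)*t : ℝ) : ℂ) * Complex.I := by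
    push_cast; ring
  have e2 : ((α/(α+1) : ℝ) : ℂ) - Complex.I * (t:ℂ)
      = ((α/(α+1) : ℝ) : ℂ) - (t : ℂ) * Complex.I := by ring
  have e3 : (1 : ℂ) - Complex.I * (t:ℂ) = 1 - (t : ℂ) * Complex.I := by ring
  rw [e1, e2, e3]
  have hDa : 0 < ‖(Complex.Gamma (((α/(α+1) : ℝ) : ℂ) - (t:ℂ) * Complex.I))‖ := by
    refine norm_pos_iff.mpr (Complex.Gamma_ne_zero_of_re_pos ?_)
    simp only [Complex.sub_re, Complex.ofReal_re, Complex.mul_re, Complex.I_re, Complex.I_im,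
      Complex.ofReal_im]
    simpa using ha
  have hD1 : 0 < ‖(Complex.Gamma (1 - (t:ℂ) * Complex.I))‖ := by
    refine norm_pos_iff.mpr (Complex.Gamma_ne_zero_of_re_pos ?_)
    simp
  have hc1pos : (0:ℝ) < Real.pi * (α+1) := by positivity
  have hN2 : ‖(Complex.Gamma (1 - (((α+1)*t : ℝ) : ℂ) * Complex.I))‖ ^ 2
      = (Real.pi * (α+1)) * |t| / Real.sinh ((Real.pi * (α+1)) * |t|) := by
    have h := abs_gamma_one_sub_mul_I_sq (t := (α+1)*t) (mul_ne_zero (ne_of_gt hα0) ht0)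
    rw [show Real.pi * ((α+1)*t) = (Real.pi * (α+1)) * t by ring] at h
    rw [h, div_sinh_abs, abs_mul, abs_of_pos hc1pos]
  have hD12 : ‖(Complex.Gamma (1 - (t:ℂ) * Complex.I))‖ ^ 2
      = Real.pi * |t| / Real.sinh (Real.pi * |t|) := by
    rw [abs_gamma_one_sub_mul_I_sq ht0, div_sinh_abs, abs_mul, abs_of_pos hπ]
  have hlow := gamma_ratio_lower ha t
  rw [Complex.ofReal_one] at hlow
  have ht2 : 1 ≤ t ^ 2 := by nlinarith [sq_abs t, abs_nonneg t]
  have hS : 1 + t ^ 2 / (α/(α+1)) ^ 2 ≤ 5 * |t| ^ 2 := by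
    rw [sq_abs]
    have hu : t ^ 2 / (α/(α+1)) ^ 2 * (α/(α+1)) ^ 2 = t ^ 2 :=
      div_mul_cancel₀ _ (by positivity)
    have upos : (0:ℝ) ≤ t ^ 2 / (α/(α+1)) ^ 2 := by positivity
    have ha4 : 1/4 ≤ (α/(α+1)) ^ 2 := by nlinarith [ha2, ha]
    nlinarith [hu, mul_le_mul_of_nonneg_left ha4 upos, ht2]
  have hδ : 0 < Real.pi * (α-1) / 4 := by
    apply div_pos (mul_pos hπ (by linarith)); norm_num
  exact abstract_bound (norm_nonneg _) hDa hD1 hΓa hN2 hD12 hlow hS (by positivity)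
    ht hδ (by ring) rfl

end MellinHelpers

open Real Set Filter Finset in
open scoped Topology in
/-- Absolute integrability over ℝ of the Mellin transform of `𝒜_α` along the imaginary
line, justifying the Mellin inversion formula for its density. -/
theorem mellin_transform_integrable
    {α : ℝ} (hα1 : 1 < α) (hα2 : α < 2) :
    Integrable (fun t : ℝ => ‖(Complex.Gamma (1 - ((α:ℂ)+1) * Complex.I * (t:ℂ)) /
        (Complex.Gamma ((α/(α+1) : ℝ) - Complex.I * (t:ℂ)) *
          Complex.Gamma (1 - Complex.I * (t:ℂ))))‖) volume := by
  have hπ := Real.pi_pos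
  have hα0 : (0:ℝ) < α + 1 := by linarith
  have ha : 0 < α/(α+1) := div_pos (by linarith) hα0
  set F : ℝ → ℝ := fun t : ℝ => ‖(Complex.Gamma (1 - ((α:ℂ)+1) * Complex.I * (t:ℂ)) /
        (Complex.Gamma ((α/(α+1) : ℝ) - Complex.I * (t:ℂ)) *
          Complex.Gamma (1 - Complex.I * (t:ℂ))))‖ with hF
  set δ : ℝ := Real.pi * (α-1) / 4 with hδdef
  set C : ℝ := Real.sqrt (5 * (Real.pi * (α+1)) /
      (Real.pi ^ 2 * (Real.Gamma (α/(α+1))) ^ 2 * (Real.pi * (α-1) / 4))) with hCdef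
  have hδ : 0 < δ := by
    rw [hδdef]; apply div_pos (mul_pos hπ (by linarith)); norm_num
  have hbound : ∀ t : ℝ, 1 ≤ |t| → F t ≤ C * Real.exp (-δ * |t|) := fun t ht =>
    main_bound hα1 ht
  -- continuity
  have hGcont : ∀ s : ℂ, 0 < s.re → ContinuousAt Complex.Gamma s := by
    intro s hs
    refine (Complex.differentiableAt_Gamma s fun m => ?_).continuousAt
    intro hm
    rw [hm] at hs
    simp only [Complex.neg_re, Complex.natCast_re] at hs
    exact absurd hs (not_lt.mpr (neg_nonpos.mpr (Nat.cast_nonneg m)))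
  have hre1 : ∀ t : ℝ, (0:ℝ) < ((1:ℂ) - ((α:ℂ)+1) * Complex.I * (t:ℂ)).re := by
    intro t
    simp [Complex.sub_re, Complex.mul_re, Complex.mul_im]
  have hre2 : ∀ t : ℝ, (0:ℝ) < (((α/(α+1) : ℝ) : ℂ) - Complex.I * (t:ℂ)).re := by
    intro t
    simp only [Complex.sub_re, Complex.ofReal_re, Complex.mul_re, Complex.I_re, Complex.I_im,
      Complex.ofReal_im]
    simpa using ha
  have hre3 : ∀ t : ℝ, (0:ℝ) < ((1:ℂ) - Complex.I * (t:ℂ)).re := by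
    intro t
    simp [Complex.sub_re, Complex.mul_re]
  have harg1 : Continuous fun t : ℝ => (1:ℂ) - ((α:ℂ)+1) * Complex.I * (t:ℂ) :=
    continuous_const.sub (continuous_const.mul Complex.continuous_ofReal)
  have harg2 : Continuous fun t : ℝ => ((α/(α+1) : ℝ) : ℂ) - Complex.I * (t:ℂ) :=
    continuous_const.sub (continuous_const.mul Complex.continuous_ofReal)
  have harg3 : Continuous fun t : ℝ => (1:ℂ) - Complex.I * (t:ℂ) :=
    continuous_const.sub (continuous_const.mul Complex.continuous_ofReal)
  have hg1 : Continuous fun t : ℝ => Complex.Gamma ((1:ℂ) - ((α:ℂ)+1) * Complex.I * (t:ℂ)) := by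
    refine continuous_iff_continuousAt.mpr fun t => ?_
    exact ContinuousAt.comp (g := Complex.Gamma)
      (f := fun t : ℝ => (1:ℂ) - ((α:ℂ)+1) * Complex.I * (t:ℂ)) (x := t) (hGcont _ (hre1 t)) harg1.continuousAt
  have hg2 : Continuous fun t : ℝ => Complex.Gamma (((α/(α+1) : ℝ) : ℂ) - Complex.I * (t:ℂ)) := by
    refine continuous_iff_continuousAt.mpr fun t => ?_
    exact ContinuousAt.comp (g := Complex.Gamma)
      (f := fun t : ℝ => ((α/(α+1) : ℝ) : ℂ) - Complex.I * (t:ℂ)) (x := t) (hGcont _ (hre2 t)) harg2.continuousAt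
  have hg3 : Continuous fun t : ℝ => Complex.Gamma ((1:ℂ) - Complex.I * (t:ℂ)) := by
    refine continuous_iff_continuousAt.mpr fun t => ?_
    exact ContinuousAt.comp (g := Complex.Gamma)
      (f := fun t : ℝ => (1:ℂ) - Complex.I * (t:ℂ)) (x := t) (hGcont _ (hre3 t)) harg3.continuousAt
  have hden : ∀ t : ℝ, Complex.Gamma (((α/(α+1) : ℝ) : ℂ) - Complex.I * (t:ℂ)) *
      Complex.Gamma (1 - Complex.I * (t:ℂ)) ≠ 0 := fun t =>
    mul_ne_zero (Complex.Gamma_ne_zero_of_re_pos (hre2 t))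
      (Complex.Gamma_ne_zero_of_re_pos (hre3 t))
  have hcont : Continuous F := by
    rw [hF]
    exact continuous_norm.comp (hg1.div (hg2.mul hg3) hden)
  -- split the real line
  rw [← integrableOn_univ,
    show (Set.univ : Set ℝ) = Set.Iio (-1) ∪ (Set.Icc (-1) 1 ∪ Set.Ioi 1) by
      ext x
      simp only [Set.mem_univ, Set.mem_union, Set.mem_Iio, Set.mem_Icc, Set.mem_Ioi, true_iff]
      rcases lt_or_ge x (-1) with h | h
      · exact Or.inl h
      · rcases le_or_gt x 1 with h2 | h2
        · exact Or.inr (Or.inl ⟨h, h2⟩)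
        · exact Or.inr (Or.inr h2),
    integrableOn_union, integrableOn_union]
  refine ⟨?_, hcont.integrableOn_Icc, ?_⟩
  · -- Iio (-1)
    rw [← (Measure.measurePreserving_neg (volume : Measure ℝ)).integrableOn_comp_preimage
        (Homeomorph.neg ℝ).measurableEmbedding]
    simp only [Function.comp_def, neg_preimage, neg_Iio, neg_neg]
    refine Integrable.mono' ((exp_neg_integrableOn_Ioi 1 hδ).const_mul C)
      ((hcont.comp continuous_neg).aestronglyMeasurable.restrict) ?_
    filter_upwards [ae_restrict_mem measurableSet_Ioi] with t ht'
    rw [Real.norm_eq_abs, abs_of_nonneg (norm_nonneg _)]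
    have h0 : (0:ℝ) < t := by linarith [mem_Ioi.mp ht']
    have h1 : (1:ℝ) ≤ |(-t)| := by
      rw [abs_neg, abs_of_pos h0]
      linarith [mem_Ioi.mp ht']
    have := hbound (-t) h1
    rwa [abs_neg, abs_of_pos h0] at this
  · -- Ioi 1
    refine Integrable.mono' ((exp_neg_integrableOn_Ioi 1 hδ).const_mul C)
      (hcont.aestronglyMeasurable.restrict) ?_
    filter_upwards [ae_restrict_mem measurableSet_Ioi] with t ht'
    rw [Real.norm_eq_abs, abs_of_nonneg (norm_nonneg _)]
    have h0 : (0:ℝ) < t := by linarith [mem_Ioi.mp ht']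
    have h1 : (1:ℝ) ≤ |t| := by rw [abs_of_pos h0]; linarith [mem_Ioi.mp ht']
    have := hbound t h1
    rwa [abs_of_pos h0] at this
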